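/- For the function G(p,ε) = (1−ε)·(p + ε·H₂(p))/(ε + (1−ε)p) defined for p ∈ (0,1) and ε ∈ (0,1), where H₂ is the binary entropy, the equation G(p,ε) = 1 + ε·log₂((1−p)/p) holds if and only if 2(1−p) = p^ε. -/

import Mathlib

open Real

/-- The binary entropy function (base-2 logarithms). -/
noncomputable def binaryEntropy (p : ℝ) : ℝ :=
  -(p * Real.logb 2 p) - (1 - p) * Real.logb 2 (1 - p)

/-- For `G(p,ε) = (1−ε)(p + ε H₂(p))/(ε + (1−ε)p)` with
`p, ε ∈ (0,1)`, `G(p,ε) = 1 + ε log₂((1−p)/p)` iff `2(1−p) = p^ε`. -/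
theorem DEC_derivative_zero_iff
    (p ε : ℝ) (hp : p ∈ Set.Ioo (0:ℝ) 1) (hε : ε ∈ Set.Ioo (0:ℝ) 1) :
    (1 - ε) * (p + ε * binaryEntropy p) / (ε + (1 - ε) * p)
      = 1 + ε * Real.logb 2 ((1 - p) / p)
    ↔ 2 * (1 - p) = p ^ ε := by
  obtain ⟨hp0, hp1⟩ := hp
  obtain ⟨hε0, hε1⟩ := hε
  have h1p : (0:ℝ) < 1 - p := by linarith
  have hD : (0:ℝ) < ε + (1 - ε) * p := by nlinarith
  have hL : (0:ℝ) < Real.log 2 := Real.log_pos one_lt_two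
  have hkey : ((1 - ε) * (p + ε * binaryEntropy p) / (ε + (1 - ε) * p)
      = 1 + ε * Real.logb 2 ((1 - p) / p))
      ↔ ε * Real.log p = Real.log 2 + Real.log (1 - p) := by
    rw [binaryEntropy, Real.logb, Real.logb, Real.logb,
      Real.log_div h1p.ne' hp0.ne', div_eq_iff hD.ne']
    constructor
    · intro h
      have h2 : ε * (ε * Real.log p) = ε * (Real.log 2 + Real.log (1 - p)) := by
        field_simp at h
        have h2 : (Real.log 2 * Real.log 2) * (ε * (ε * Real.log p))
            = (Real.log 2 * Real.log 2) * (ε * (Real.log 2 + Real.log (1 - p))) := by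
          linear_combination (Real.log 2 * Real.log 2) * h
        exact mul_left_cancel₀ (by positivity) h2
      exact mul_left_cancel₀ hε0.ne' h2
    · intro h
      field_simp
      linear_combination ε * h
  rw [hkey]
  rw [show Real.log 2 + Real.log (1 - p) = Real.log (2 * (1 - p)) from
    (Real.log_mul two_ne_zero h1p.ne').symm,
    show ε * Real.log p = Real.log (p ^ ε) from (Real.log_rpow hp0 ε).symm]
  rw [Real.log_injOn_pos.eq_iff (Set.mem_Ioi.mpr (Real.rpow_pos_of_pos hp0 ε))
    (Set.mem_Ioi.mpr (show (0:ℝ) < 2 * (1 - p) by positivity))]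
  exact eq_comm
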